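/- Let X ~ N(0, I_p) and let σ(t) = e^t/(1+e^t). For every ε > 0 there exists δ > 0 such that if (α, β) ∈ R^p × R satisfies E[(1/2 − σ(α·X + β))^2] ≤ δ^2, then ‖α‖_2 + |β| ≤ ε. -/

import Mathlib

open MeasureTheory ProbabilityTheory
open scoped ENNReal NNReal

section helpers

/-- The standard gaussian measure of any set is at most `(√(2π))⁻¹` times its Lebesgue measure. -/
lemma gauss_set_bound (s : Set ℝ) :
    gaussianReal 0 1 s ≤ ENNReal.ofReal (Real.sqrt (2 * Real.pi))⁻¹ * volume s := by
  rw [gaussianReal_apply 0 one_ne_zero s]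
  have hb : ∀ x : ℝ, gaussianPDF 0 1 x ≤ ENNReal.ofReal (Real.sqrt (2 * Real.pi))⁻¹ := by
    intro x
    rw [gaussianPDF]
    apply ENNReal.ofReal_le_ofReal
    rw [gaussianPDFReal]
    have h1 : Real.exp (-(x - 0) ^ 2 / (2 * ((1 : NNReal) : ℝ))) ≤ 1 := by
      rw [Real.exp_le_one_iff]
      push_cast
      nlinarith [sq_nonneg (x - 0)]
    have h2 : (0:ℝ) < (Real.sqrt (2 * Real.pi * ((1:NNReal):ℝ)))⁻¹ := by
      push_cast
      rw [mul_one]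
      have := Real.pi_pos
      positivity
    calc (Real.sqrt (2 * Real.pi * ((1:NNReal):ℝ)))⁻¹ * Real.exp (-(x - 0) ^ 2 / (2 * ((1:NNReal):ℝ)))
        ≤ (Real.sqrt (2 * Real.pi * ((1:NNReal):ℝ)))⁻¹ * 1 := by
          exact mul_le_mul_of_nonneg_left h1 (le_of_lt h2)
      _ = (Real.sqrt (2 * Real.pi))⁻¹ := by push_cast; rw [mul_one, mul_one]
  calc ∫⁻ x in s, gaussianPDF 0 1 x
      ≤ ∫⁻ _ in s, ENNReal.ofReal (Real.sqrt (2 * Real.pi))⁻¹ := lintegral_mono fun x => hb x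
    _ = ENNReal.ofReal (Real.sqrt (2 * Real.pi))⁻¹ * volume s := by
        rw [setLIntegral_const]

/-- Anticoncentration for a linear functional of i.i.d. standard gaussians, `p = n+1` case. -/
lemma anticonc_succ {n : ℕ} (α : Fin (n + 1) → ℝ) (β c : ℝ) (j : Fin (n + 1)) (hj : α j ≠ 0) :
    (Measure.pi fun _ : Fin (n + 1) => gaussianReal 0 1)
        {x | |(∑ i, α i * x i) + β| ≤ c}
      ≤ ENNReal.ofReal ((Real.sqrt (2 * Real.pi))⁻¹ * (2 * c / |α j|)) := by
  set μpi := Measure.pi fun _ : Fin (n + 1) => gaussianReal 0 1 with hμpi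
  set e := MeasurableEquiv.piFinSuccAbove (fun _ : Fin (n + 1) => ℝ) j with he
  have hpres := measurePreserving_piFinSuccAbove (fun _ : Fin (n + 1) => gaussianReal 0 1) j
  set A : Set (ℝ × (Fin n → ℝ)) :=
    {z | |α j * z.1 + ((∑ k, α (j.succAbove k) * z.2 k) + β)| ≤ c} with hA
  have hfm : Measurable fun z : ℝ × (Fin n → ℝ) =>
      α j * z.1 + ((∑ k, α (j.succAbove k) * z.2 k) + β) := by
    apply Measurable.add
    · exact measurable_fst.const_mul _
    · apply Measurable.add_const
      exact Finset.measurable_sum _ fun k _ =>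
        ((measurable_pi_apply k).comp measurable_snd).const_mul _
  have hAm : MeasurableSet A := measurableSet_le hfm.abs measurable_const
  have hVA : {x : Fin (n + 1) → ℝ | |(∑ i, α i * x i) + β| ≤ c} = e ⁻¹' A := by
    ext x
    simp only [Set.mem_preimage, Set.mem_setOf_eq, hA, he,
      MeasurableEquiv.piFinSuccAbove_apply, Fin.insertNthEquiv_symm_apply,
      Fin.removeNth]
    rw [Fin.sum_univ_succAbove (fun i => α i * x i) j, add_assoc]
  rw [hVA, hpres.measure_preimage hAm.nullMeasurableSet]
  set K := ENNReal.ofReal ((Real.sqrt (2 * Real.pi))⁻¹ * (2 * c / |α j|)) with hK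
  have hslice : ∀ y : Fin n → ℝ, gaussianReal 0 1 ((fun t => (t, y)) ⁻¹' A) ≤ K := by
    intro y
    set d := (∑ k, α (j.succAbove k) * y k) + β with hd
    have h0 : (0:ℝ) < |α j| := abs_pos.mpr hj
    have hsub : ((fun t => (t, y)) ⁻¹' A) ⊆
        Set.Icc (-(d / α j) - c / |α j|) (-(d / α j) + c / |α j|) := by
      intro t ht
      simp only [Set.mem_preimage, Set.mem_setOf_eq, hA] at ht
      have h1 : α j * (t + d / α j) = α j * t + d := by field_simp
      have h2 : |α j| * |t + d / α j| ≤ c := by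
        rw [← abs_mul, h1]; exact ht
      have h3 : |t + d / α j| ≤ c / |α j| := by
        rw [le_div_iff₀ h0]; nlinarith
      rw [abs_le] at h3
      constructor <;> [linarith [h3.1]; linarith [h3.2]]
    calc gaussianReal 0 1 ((fun t => (t, y)) ⁻¹' A)
        ≤ gaussianReal 0 1 (Set.Icc (-(d / α j) - c / |α j|) (-(d / α j) + c / |α j|)) :=
          measure_mono hsub
      _ ≤ ENNReal.ofReal (Real.sqrt (2 * Real.pi))⁻¹ *
            volume (Set.Icc (-(d / α j) - c / |α j|) (-(d / α j) + c / |α j|)) :=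
          gauss_set_bound _
      _ = ENNReal.ofReal (Real.sqrt (2 * Real.pi))⁻¹ * ENNReal.ofReal (2 * c / |α j|) := by
          rw [Real.volume_Icc]
          congr 1
          ring_nf
      _ = K := by
          rw [hK, ENNReal.ofReal_mul (by positivity)]
  calc ((gaussianReal 0 1).prod (Measure.pi fun _ : Fin n => gaussianReal 0 1)) A
      = ∫⁻ y, gaussianReal 0 1 ((fun t => (t, y)) ⁻¹' A)
          ∂(Measure.pi fun _ : Fin n => gaussianReal 0 1) := Measure.prod_apply_symm hAm
    _ ≤ ∫⁻ _, K ∂(Measure.pi fun _ : Fin n => gaussianReal 0 1) :=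
        lintegral_mono fun y => hslice y
    _ = K := by rw [lintegral_const, measure_univ, mul_one]

lemma anticonc {p : ℕ} (α : Fin p → ℝ) (β c : ℝ) (j : Fin p) (hj : α j ≠ 0) :
    (Measure.pi fun _ : Fin p => gaussianReal 0 1)
        {x | |(∑ i, α i * x i) + β| ≤ c}
      ≤ ENNReal.ofReal ((Real.sqrt (2 * Real.pi))⁻¹ * (2 * c / |α j|)) := by
  cases p with
  | zero => exact j.elim0
  | succ n => exact anticonc_succ α β c j hj

lemma sigma_mono {σ : ℝ → ℝ} (hσ : ∀ t, σ t = Real.exp t / (1 + Real.exp t))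
    {a b : ℝ} (h : a ≤ b) : σ a ≤ σ b := by
  rw [hσ, hσ]
  have ha := Real.exp_pos a
  have hb := Real.exp_pos b
  have hab := Real.exp_le_exp.mpr h
  rw [div_le_div_iff₀ (by positivity) (by positivity)]
  nlinarith

lemma sigma_neg {σ : ℝ → ℝ} (hσ : ∀ t, σ t = Real.exp t / (1 + Real.exp t))
    (t : ℝ) : σ (-t) = 1 - σ t := by
  rw [hσ, hσ, Real.exp_neg]
  have h := Real.exp_pos t
  field_simp
  ring

/-- monotonicity of the squared deviation in `|t|`. -/
lemma sq_dev_mono {σ : ℝ → ℝ} (hσ : ∀ t, σ t = Real.exp t / (1 + Real.exp t))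
    {c t : ℝ} (hc : 0 < c) (ht : c ≤ |t|) :
    (1 / 2 - σ c) ^ 2 ≤ (1 / 2 - σ t) ^ 2 := by
  have hσ0 : σ 0 = 1 / 2 := by rw [hσ]; simp [Real.exp_zero]; norm_num
  have hc2 : 1 / 2 ≤ σ c := by rw [← hσ0]; exact sigma_mono hσ hc.le
  rcases le_abs.mp ht with h | h
  · have h1 : σ c ≤ σ t := sigma_mono hσ h
    nlinarith
  · have h2 : t ≤ -c := by linarith
    have h1 : σ t ≤ σ (-c) := sigma_mono hσ h2
    rw [sigma_neg hσ] at h1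
    nlinarith

/-- the standard gaussian product measure is symmetric under negation -/
lemma gauss_pi_neg {p : ℕ} :
    MeasurePreserving (fun (x : Fin p → ℝ) i => -(x i))
      (Measure.pi fun _ : Fin p => gaussianReal 0 1)
      (Measure.pi fun _ : Fin p => gaussianReal 0 1) := by
  apply measurePreserving_pi
  intro i
  refine ⟨measurable_neg, ?_⟩
  have h1 : (fun x : ℝ => -x) = (fun x : ℝ => (-1 : ℝ) * x) := by funext x; ring
  show Measure.map (fun x : ℝ => -x) (gaussianReal 0 1) = gaussianReal 0 1
  rw [h1, gaussianReal_map_const_mul]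
  have h2 : (⟨(-1 : ℝ) ^ 2, sq_nonneg _⟩ : NNReal) = 1 := by ext; norm_num
  rw [mul_zero]; congr 1; ext
  norm_num

lemma sqrt_nat_le_self (p : ℕ) : Real.sqrt (p : ℝ) ≤ (p : ℝ) := by
  have h0 : (0:ℝ) ≤ p := Nat.cast_nonneg p
  have hle : (p:ℝ) ≤ (p:ℝ) ^ 2 := by
    rcases Nat.eq_zero_or_pos p with hz | hp
    · simp [hz]
    · have h1 : (1:ℝ) ≤ (p : ℝ) := Nat.one_le_cast.mpr hp
      nlinarith
  calc Real.sqrt (p : ℝ) ≤ Real.sqrt ((p:ℝ) ^ 2) := Real.sqrt_le_sqrt hle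
    _ = (p : ℝ) := Real.sqrt_sq h0

end helpers

set_option maxHeartbeats 2000000 in
theorem logistic_strong_identifiability_gaussian
    {p : ℕ}
    (ν : Measure (Fin p → ℝ))
    (hν : ν = Measure.pi fun _ : Fin p => gaussianReal 0 1)
    (σ : ℝ → ℝ) (hσ : ∀ t, σ t = Real.exp t / (1 + Real.exp t)) :
    ∀ ε > (0 : ℝ), ∃ δ > (0 : ℝ), ∀ (α : Fin p → ℝ) (β : ℝ),
      (∫ x, (1 / 2 - σ ((∑ i, α i * x i) + β)) ^ 2 ∂ν) ≤ δ ^ 2 →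
      Real.sqrt (∑ i, (α i) ^ 2) + |β| ≤ ε := by
  subst hν
  haveI : IsProbabilityMeasure (Measure.pi fun _ : Fin p => gaussianReal 0 1) :=
    Measure.pi.instIsProbabilityMeasure _
  intro ε hε
  have hp1 : (0:ℝ) < 3 * ((p : ℝ) + 1) := by positivity
  set c : ℝ := ε / (3 * ((p : ℝ) + 1)) with hc_def
  have hc : 0 < c := by positivity
  -- basic facts about σ
  have hσpos : ∀ t, 0 < σ t := by
    intro t; rw [hσ]; have := Real.exp_pos t; positivity
  have hσlt1 : ∀ t, σ t < 1 := by
    intro t; rw [hσ]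
    rw [div_lt_one (by positivity)]
    linarith [Real.exp_pos t]
  have hσ0 : σ 0 = 1 / 2 := by rw [hσ]; simp [Real.exp_zero]; norm_num
  have hσc : 1 / 2 < σ c := by
    rw [← hσ0]
    rw [hσ, hσ]
    have h1 : Real.exp 0 < Real.exp c := Real.exp_lt_exp.mpr hc
    have h2 := Real.exp_pos c
    rw [div_lt_div_iff₀ (by positivity) (by positivity)]
    rw [Real.exp_zero] at h1 ⊢
    nlinarith
  set q : ℝ := (1 / 2 - σ c) ^ 2 with hq_def
  have hq : 0 < q := by
    have h1 : 1 / 2 - σ c < 0 := by linarith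
    nlinarith
  refine ⟨Real.sqrt (q / 10), Real.sqrt_pos.mpr (by positivity), ?_⟩
  intro α β hint
  rw [Real.sq_sqrt (by positivity : (0:ℝ) ≤ q / 10)] at hint
  set ν := Measure.pi fun _ : Fin p => gaussianReal 0 1 with hν_def
  -- measurability
  have hTm : Measurable fun x : Fin p → ℝ => (∑ i, α i * x i) + β :=
    (Finset.measurable_sum _ fun i _ => (measurable_pi_apply i).const_mul _).add_const β
  have hσm : Measurable σ := by
    have hfs : σ = fun t => Real.exp t / (1 + Real.exp t) := funext hσ
    rw [hfs]
    exact (Real.continuous_exp.div (continuous_const.add Real.continuous_exp)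
      fun t => (by positivity : (0:ℝ) < 1 + Real.exp t).ne').measurable
  have hfm : Measurable fun x : Fin p → ℝ => (1 / 2 - σ ((∑ i, α i * x i) + β)) ^ 2 :=
    (measurable_const.sub (hσm.comp hTm)).pow_const 2
  have hfi : Integrable (fun x : Fin p → ℝ => (1 / 2 - σ ((∑ i, α i * x i) + β)) ^ 2) ν := by
    refine (integrable_const (1 / 4 : ℝ)).mono' hfm.aestronglyMeasurable (ae_of_all _ fun x => ?_)
    have h1 := hσpos ((∑ i, α i * x i) + β)
    have h2 := hσlt1 ((∑ i, α i * x i) + β)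
    rw [Real.norm_eq_abs, abs_of_nonneg (sq_nonneg _)]
    nlinarith
  set S : Set (Fin p → ℝ) := {x | c ≤ |(∑ i, α i * x i) + β|} with hS_def
  have hSm : MeasurableSet S := measurableSet_le measurable_const hTm.abs
  -- Markov inequality step
  have hMark : (ν S).toReal ≤ 1 / 10 := by
    have h1 : ∫ x in S, q ∂ν ≤ ∫ x in S, (1 / 2 - σ ((∑ i, α i * x i) + β)) ^ 2 ∂ν := by
      refine setIntegral_mono_on (integrable_const q).integrableOn hfi.integrableOn hSm ?_
      intro x hx
      exact sq_dev_mono hσ hc hx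
    rw [setIntegral_const, smul_eq_mul] at h1
    have h2 : ∫ x in S, (1 / 2 - σ ((∑ i, α i * x i) + β)) ^ 2 ∂ν
        ≤ ∫ x, (1 / 2 - σ ((∑ i, α i * x i) + β)) ^ 2 ∂ν :=
      setIntegral_le_integral hfi (ae_of_all _ fun x => sq_nonneg _)
    have h3 : (ν S).toReal * q ≤ q / 10 := le_trans h1 (le_trans h2 hint)
    nlinarith [ENNReal.toReal_nonneg (a := ν S)]
  have hcomp : (9:ℝ) / 10 ≤ (ν Sᶜ).toReal := by
    rw [prob_compl_eq_one_sub hSm,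
      ENNReal.toReal_sub_of_le prob_le_one ENNReal.one_ne_top, ENNReal.toReal_one]
    linarith
  -- the complement is where |T| < c
  have hScomp : Sᶜ = {x : Fin p → ℝ | |(∑ i, α i * x i) + β| < c} := by
    ext x; simp [hS_def, not_le]
  -- Step 1 : |β| ≤ c
  have hβ : |β| ≤ c := by
    by_contra hcon
    push_neg at hcon
    set N : Set (Fin p → ℝ) := {x | (∑ i, α i * x i) < 0} with hN_def
    set P : Set (Fin p → ℝ) := {x | 0 < (∑ i, α i * x i)} with hP_def
    have hsumm : Measurable fun x : Fin p → ℝ => ∑ i, α i * x i :=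
      Finset.measurable_sum _ fun i _ => (measurable_pi_apply i).const_mul _
    have hNm : MeasurableSet N := measurableSet_lt hsumm measurable_const
    have hPm : MeasurableSet P := measurableSet_lt measurable_const hsumm
    have hNP : ν N = ν P := by
      have hpres := gauss_pi_neg (p := p)
      have hkey := hpres.measure_preimage (hNm.nullMeasurableSet :
        NullMeasurableSet N (Measure.pi fun _ : Fin p => gaussianReal 0 1))
      have hpre : (fun (x : Fin p → ℝ) i => -(x i)) ⁻¹' N = P := by
        ext x
        simp only [Set.mem_preimage, Set.mem_setOf_eq, hN_def, hP_def, mul_neg]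
        rw [Finset.sum_neg_distrib]
        exact neg_lt_zero
      rw [hpre] at hkey
      exact hkey.symm
    have hdisj : Disjoint N P := by
      rw [Set.disjoint_left]
      intro x hx1 hx2
      simp only [hN_def, Set.mem_setOf_eq] at hx1
      simp only [hP_def, Set.mem_setOf_eq] at hx2
      linarith
    have hNhalf : (ν N).toReal ≤ 1 / 2 := by
      have hsum : ν N + ν P ≤ 1 := by
        rw [← measure_union hdisj hPm]
        exact prob_le_one
      have h2 : (ν N + ν P).toReal ≤ 1 := by
        calc (ν N + ν P).toReal ≤ (1 : ℝ≥0∞).toReal :=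
              ENNReal.toReal_mono ENNReal.one_ne_top hsum
          _ = 1 := ENNReal.toReal_one
      rw [ENNReal.toReal_add (measure_ne_top _ _) (measure_ne_top _ _), ← hNP] at h2
      linarith
    have hPhalf : (ν P).toReal ≤ 1 / 2 := by rw [← hNP]; exact hNhalf
    rcases lt_abs.mp hcon with hb | hb
    · -- β > c : Sᶜ ⊆ N
      have hsub : Sᶜ ⊆ N := by
        intro x hx
        rw [hScomp] at hx
        simp only [Set.mem_setOf_eq] at hx
        simp only [hN_def, Set.mem_setOf_eq]
        have h1 : (∑ i, α i * x i) + β ≤ |(∑ i, α i * x i) + β| := le_abs_self _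
        linarith
      have hfin : (ν Sᶜ).toReal ≤ (ν N).toReal :=
        ENNReal.toReal_mono (measure_ne_top _ _) (measure_mono hsub)
      linarith
    · -- β < -c : Sᶜ ⊆ P
      have hb' : β < -c := by linarith
      have hsub : Sᶜ ⊆ P := by
        intro x hx
        rw [hScomp] at hx
        simp only [Set.mem_setOf_eq] at hx
        simp only [hP_def, Set.mem_setOf_eq]
        have h1 : -((∑ i, α i * x i) + β) ≤ |(∑ i, α i * x i) + β| := neg_le_abs _
        linarith
      have hfin : (ν Sᶜ).toReal ≤ (ν P).toReal :=
        ENNReal.toReal_mono (measure_ne_top _ _) (measure_mono hsub)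
      linarith
  -- Step 2 : every |α j| ≤ 3c
  have hα : ∀ j, |α j| ≤ 3 * c := by
    intro j
    by_contra hcon
    push_neg at hcon
    have hj : α j ≠ 0 := by
      intro h; rw [h] at hcon; simp at hcon; linarith
    have hAC := anticonc α β c j hj
    have hsub : Sᶜ ⊆ {x : Fin p → ℝ | |(∑ i, α i * x i) + β| ≤ c} := by
      rw [hScomp]; intro x hx
      simp only [Set.mem_setOf_eq] at hx ⊢
      exact hx.le
    have hbound : (ν {x : Fin p → ℝ | |(∑ i, α i * x i) + β| ≤ c}).toReal
        ≤ (Real.sqrt (2 * Real.pi))⁻¹ * (2 * c / |α j|) := by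
      calc (ν {x : Fin p → ℝ | |(∑ i, α i * x i) + β| ≤ c}).toReal
          ≤ (ENNReal.ofReal ((Real.sqrt (2 * Real.pi))⁻¹ * (2 * c / |α j|))).toReal :=
            ENNReal.toReal_mono ENNReal.ofReal_ne_top hAC
        _ = (Real.sqrt (2 * Real.pi))⁻¹ * (2 * c / |α j|) := by
            rw [ENNReal.toReal_ofReal (by positivity)]
      -- positivity for (√(2π))⁻¹ * (2c/|αj|) : all nonneg
    have h2c : 2 * c / |α j| < 2 / 3 := by
      rw [div_lt_iff₀ (abs_pos.mpr hj)]
      nlinarith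
    have hsqrt : (2:ℝ) < Real.sqrt (2 * Real.pi) := by
      rw [Real.lt_sqrt (by norm_num)]
      nlinarith [Real.pi_gt_three]
    have hinv : (Real.sqrt (2 * Real.pi))⁻¹ < 1 / 2 := by
      rw [show (1:ℝ) / 2 = 2⁻¹ by norm_num]
      exact inv_strictAnti₀ (by norm_num) hsqrt
    have hfinal : (ν {x : Fin p → ℝ | |(∑ i, α i * x i) + β| ≤ c}).toReal < 1 / 3 := by
      have hge : (0:ℝ) ≤ 2 * c / |α j| := by positivity
      calc (ν {x : Fin p → ℝ | |(∑ i, α i * x i) + β| ≤ c}).toReal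
          ≤ (Real.sqrt (2 * Real.pi))⁻¹ * (2 * c / |α j|) := hbound
        _ < (1 / 2) * (2 / 3) := by
            apply mul_lt_mul' (le_of_lt hinv) h2c hge (by norm_num)
        _ = 1 / 3 := by norm_num
    have hmono : (ν Sᶜ).toReal ≤ (ν {x : Fin p → ℝ | |(∑ i, α i * x i) + β| ≤ c}).toReal :=
      ENNReal.toReal_mono (measure_ne_top _ _) (measure_mono hsub)
    linarith
  -- Conclusion
  have hsum_sq : (∑ i, (α i) ^ 2) ≤ (p : ℝ) * (3 * c) ^ 2 := by
    calc (∑ i, (α i) ^ 2) ≤ ∑ _i : Fin p, (3 * c) ^ 2 := by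
          apply Finset.sum_le_sum
          intro i _
          have := hα i
          nlinarith [abs_nonneg (α i), sq_abs (α i)]
      _ = (p : ℝ) * (3 * c) ^ 2 := by
          rw [Finset.sum_const, Finset.card_univ, Fintype.card_fin, nsmul_eq_mul]
  have hsqrt_le : Real.sqrt (∑ i, (α i) ^ 2) ≤ Real.sqrt (p : ℝ) * (3 * c) := by
    calc Real.sqrt (∑ i, (α i) ^ 2) ≤ Real.sqrt ((p : ℝ) * (3 * c) ^ 2) :=
          Real.sqrt_le_sqrt hsum_sq
      _ = Real.sqrt (p : ℝ) * (3 * c) := by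
          rw [Real.sqrt_mul (Nat.cast_nonneg p), Real.sqrt_sq (by positivity)]
  have hsp : Real.sqrt (p : ℝ) ≤ (p : ℝ) := sqrt_nat_le_self p
  have hcε : 3 * ((p : ℝ) + 1) * c = ε := by
    rw [hc_def]; field_simp
  have h1 : Real.sqrt (p : ℝ) * (3 * c) ≤ (p : ℝ) * (3 * c) :=
    mul_le_mul_of_nonneg_right hsp (by positivity)
  linarith [hsqrt_le, h1, hβ]
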